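/- Let G=(A,B,E) be a finite bipartite graph and T ⊆ A a set that is α-separable, i.e., there exist S ⊆ B with |S| ≥ α|B| and disjoint T₀', T₁' ⊆ T with |T₀'|,|T₁'| ≥ α|T| such that |d(S,T₀') - d(S,T₁')| ≥ α, where d(S,U) = e(S,U)/(|S||U|) and e(S,U) is the number of edges between S and U. Then there exist S ⊆ B with |S| ≥ α|B|, subsets T₀, T₁ ⊆ T with |T₀|,|T₁| ≥ (α²/2)|T|, and reals d₀, d₁ with d₁ - d₀ ≥ (α/4)|S|, such that every h ∈ T₀ satisfies e(h,S) ≤ d₀ and every h ∈ T₁ satisfies e(h,S) ≥ d₁. -/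

import Mathlib

open Finset

variable {A B : Type*} [Fintype A] [Fintype B] [DecidableEq A] [DecidableEq B]

/-- `eDeg E h S` is the number of edges between vertex `h ∈ A` and the set `S ⊆ B`
in the bipartite graph with edge relation `E`. -/
def eDeg (E : A → B → Prop) [∀ a, DecidablePred (E a)] (h : A) (S : Finset B) : ℕ :=
  (S.filter (E h)).card

/-- `density E S U = e(S,U)/(|S||U|)`, the edge density between `S ⊆ B` and `U ⊆ A`. -/
noncomputable def density (E : A → B → Prop) [∀ a, DecidablePred (E a)]
    (S : Finset B) (U : Finset A) : ℝ :=
  (∑ h ∈ U, (eDeg E h S : ℝ)) / ((S.card : ℝ) * (U.card : ℝ))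

set_option maxHeartbeats 1000000

lemma aux (E : A → B → Prop) [∀ a, DecidablePred (E a)]
    (α : ℝ) (hα0 : 0 < α) (hα1 : α < 1) (T : Finset A)
    (S : Finset B) (U0 U1 : Finset A)
    (h0T : U0 ⊆ T) (h1T : U1 ⊆ T)
    (hS : α * (Fintype.card B : ℝ) ≤ (S.card : ℝ))
    (h0 : α * (T.card : ℝ) ≤ (U0.card : ℝ))
    (h1 : α * (T.card : ℝ) ≤ (U1.card : ℝ))
    (hgap : α ≤ density E S U1 - density E S U0) :
    ∃ (S : Finset B) (T0 T1 : Finset A) (d0 d1 : ℝ),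
      T0 ⊆ T ∧ T1 ⊆ T ∧
      α * (Fintype.card B : ℝ) ≤ (S.card : ℝ) ∧
      α ^ 2 / 2 * (T.card : ℝ) ≤ (T0.card : ℝ) ∧
      α ^ 2 / 2 * (T.card : ℝ) ≤ (T1.card : ℝ) ∧
      α / 4 * (S.card : ℝ) ≤ d1 - d0 ∧
      (∀ h ∈ T0, (eDeg E h S : ℝ) ≤ d0) ∧
      (∀ h ∈ T1, d1 ≤ (eDeg E h S : ℝ)) := by
  classical
  -- degenerate cases
  rcases Nat.eq_zero_or_pos T.card with hT | hT
  · exfalso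
    have hT' : T = ∅ := card_eq_zero.mp hT
    have e0 : U0 = ∅ := subset_empty.mp (hT' ▸ h0T)
    have e1 : U1 = ∅ := subset_empty.mp (hT' ▸ h1T)
    rw [e0, e1] at hgap
    simp [density] at hgap
    linarith
  rcases Nat.eq_zero_or_pos (Fintype.card B) with hB | hB
  · exfalso
    have hS' : S = ∅ := by
      have := S.card_le_univ
      simp only [card_univ, hB, Nat.le_zero] at this
      exact card_eq_zero.mp this
    rw [hS'] at hgap
    simp [density, eDeg] at hgap
    linarith
  have hTpos : (0:ℝ) < T.card := by exact_mod_cast hT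
  have spos : (0:ℝ) < S.card := lt_of_lt_of_le (mul_pos hα0 (by exact_mod_cast hB)) hS
  have t0pos : (0:ℝ) < U0.card := lt_of_lt_of_le (mul_pos hα0 hTpos) h0
  have t1pos : (0:ℝ) < U1.card := lt_of_lt_of_le (mul_pos hα0 hTpos) h1
  set s : ℝ := (S.card : ℝ) with hs
  set t0 : ℝ := (U0.card : ℝ) with ht0
  set t1 : ℝ := (U1.card : ℝ) with ht1
  set δ0 : ℝ := density E S U0 with hδ0
  set δ1 : ℝ := density E S U1 with hδ1
  have h2α : (0:ℝ) < 2 - α := by linarith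
  have hsum0 : ∑ h ∈ U0, (eDeg E h S : ℝ) = δ0 * (s * t0) := by
    rw [hδ0, density, div_mul_eq_mul_div, eq_div_iff (mul_pos spos t0pos).ne']
  have hsum1 : ∑ h ∈ U1, (eDeg E h S : ℝ) = δ1 * (s * t1) := by
    rw [hδ1, density, div_mul_eq_mul_div, eq_div_iff (mul_pos spos t1pos).ne']
  have hδ0nn : 0 ≤ δ0 := by
    rw [hδ0, density]
    positivity
  have hδ1le : δ1 ≤ 1 := by
    rw [hδ1, density, div_le_one (by positivity)]
    calc ∑ h ∈ U1, (eDeg E h S : ℝ) ≤ ∑ _h ∈ U1, (S.card : ℝ) := by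
          refine Finset.sum_le_sum fun i _ => ?_
          exact_mod_cast Nat.cast_le.mpr (card_filter_le _ _)
      _ = s * t1 := by rw [Finset.sum_const, nsmul_eq_mul]; ring
  set θ0 : ℝ := 2 * δ0 * s / (2 - α) with hθ0
  set θ1 : ℝ := (2 * δ1 - α) * s / (2 - α) with hθ1
  have key0 : (2 - α) * θ0 = 2 * δ0 * s := by rw [hθ0]; field_simp
  have key1 : (2 - α) * θ1 = (2 * δ1 - α) * s := by rw [hθ1]; field_simp
  set T0 : Finset A := U0.filter (fun h => (eDeg E h S : ℝ) ≤ θ0) with hT0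
  set T1 : Finset A := U1.filter (fun h => θ1 ≤ (eDeg E h S : ℝ)) with hT1
  set K0 : Finset A := U0.filter (fun h => ¬ ((eDeg E h S : ℝ) ≤ θ0)) with hK0
  set K1 : Finset A := U1.filter (fun h => ¬ (θ1 ≤ (eDeg E h S : ℝ))) with hK1
  have hsplit0 : (T0.card : ℝ) + (K0.card : ℝ) = t0 := by
    rw [ht0]
    exact_mod_cast congrArg (Nat.cast : ℕ → ℝ)
      (card_filter_add_card_filter_not (s := U0)
        (p := fun h => (eDeg E h S : ℝ) ≤ θ0))
  have hsplit1 : (T1.card : ℝ) + (K1.card : ℝ) = t1 := by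
    rw [ht1]
    exact_mod_cast congrArg (Nat.cast : ℕ → ℝ)
      (card_filter_add_card_filter_not (s := U1)
        (p := fun h => θ1 ≤ (eDeg E h S : ℝ)))
  -- size of T0
  have hA : α / 2 * t0 ≤ (T0.card : ℝ) := by
    rcases K0.eq_empty_or_nonempty with hk | hk
    · rw [hk] at hsplit0
      simp at hsplit0
      nlinarith [t0pos]
    · have hstrict : (K0.card : ℝ) * θ0 < ∑ h ∈ K0, (eDeg E h S : ℝ) := by
        have := Finset.sum_lt_sum_of_nonempty hk
          (f := fun _ => θ0) (g := fun h => (eDeg E h S : ℝ))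
          (fun i hi => by
            have := (mem_filter.mp hi).2
            push_neg at this
            exact this)
        simpa [Finset.sum_const, nsmul_eq_mul] using this
      have hle : ∑ h ∈ K0, (eDeg E h S : ℝ) ≤ ∑ h ∈ U0, (eDeg E h S : ℝ) := by
        refine Finset.sum_le_sum_of_subset_of_nonneg (filter_subset _ _) fun i _ _ => by positivity
      have hmain : (K0.card : ℝ) * θ0 < δ0 * (s * t0) := by
        rw [← hsum0]; exact lt_of_lt_of_le hstrict hle
      have hcc : (K0.card : ℝ) * (2 * δ0 * s) < (2 - α) * (δ0 * (s * t0)) := by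
        calc (K0.card : ℝ) * (2 * δ0 * s) = (2 - α) * ((K0.card : ℝ) * θ0) := by
              rw [← key0]; ring
          _ < (2 - α) * (δ0 * (s * t0)) := by
              exact mul_lt_mul_of_pos_left hmain h2α
      have hsplit0m : ((T0.card : ℝ) + (K0.card : ℝ)) * (δ0 * s) = t0 * (δ0 * s) := by
        rw [hsplit0]
      nlinarith [mul_nonneg hδ0nn spos.le, hsplit0m, hcc]
  -- size of T1
  have hB1 : α / 2 * t1 ≤ (T1.card : ℝ) := by
    rcases K1.eq_empty_or_nonempty with hk | hk
    · rw [hk] at hsplit1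
      simp at hsplit1
      nlinarith [t1pos]
    · have hstrict : ∑ h ∈ K1, (eDeg E h S : ℝ) < (K1.card : ℝ) * θ1 := by
        have := Finset.sum_lt_sum_of_nonempty hk
          (f := fun h => (eDeg E h S : ℝ)) (g := fun _ => θ1)
          (fun i hi => by
            have := (mem_filter.mp hi).2
            push_neg at this
            exact this)
        simpa [Finset.sum_const, nsmul_eq_mul] using this
      have hsumT1 : ∑ h ∈ T1, (eDeg E h S : ℝ) ≤ (T1.card : ℝ) * s := by
        calc ∑ h ∈ T1, (eDeg E h S : ℝ) ≤ ∑ _h ∈ T1, s := by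
              refine Finset.sum_le_sum fun i _ => ?_
              rw [hs]
              exact_mod_cast Nat.cast_le.mpr (card_filter_le _ _)
          _ = (T1.card : ℝ) * s := by rw [Finset.sum_const, nsmul_eq_mul]
      have hdecomp : ∑ h ∈ U1, (eDeg E h S : ℝ)
          = ∑ h ∈ T1, (eDeg E h S : ℝ) + ∑ h ∈ K1, (eDeg E h S : ℝ) := by
        rw [hT1, hK1]
        exact (Finset.sum_filter_add_sum_filter_not U1 _ _).symm
      have hmain : δ1 * (s * t1) < (T1.card : ℝ) * s + (K1.card : ℝ) * θ1 := by
        rw [← hsum1, hdecomp]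
        exact add_lt_add_of_le_of_lt hsumT1 hstrict
      have hcc : (2 - α) * (δ1 * (s * t1)) <
          (2 - α) * ((T1.card : ℝ) * s) + (K1.card : ℝ) * ((2 * δ1 - α) * s) := by
        have := mul_lt_mul_of_pos_left hmain h2α
        calc (2 - α) * (δ1 * (s * t1))
            < (2 - α) * ((T1.card : ℝ) * s + (K1.card : ℝ) * θ1) := this
          _ = (2 - α) * ((T1.card : ℝ) * s) + (K1.card : ℝ) * ((2 - α) * θ1) := by ring
          _ = (2 - α) * ((T1.card : ℝ) * s) + (K1.card : ℝ) * ((2 * δ1 - α) * s) := by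
              rw [key1]
      have hsplit1m : ((T1.card : ℝ) + (K1.card : ℝ)) * s = t1 * s := by
        rw [hsplit1]
      nlinarith [mul_nonneg (sub_nonneg.mpr hδ1le) spos.le, hsplit1m, hcc]
  refine ⟨S, T0, T1, θ0, θ1, (filter_subset _ _).trans h0T, (filter_subset _ _).trans h1T,
    hS, ?_, ?_, ?_, ?_, ?_⟩
  · nlinarith [hA, h0, hα0.le]
  · nlinarith [hB1, h1, hα0.le]
  · -- α/4 * s ≤ θ1 - θ0
    have hgs : α * s ≤ (δ1 - δ0) * s := mul_le_mul_of_nonneg_right hgap spos.le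
    nlinarith [key0, key1, h2α, spos.le, mul_pos hα0 spos]
  · intro h hh
    exact (mem_filter.mp hh).2
  · intro h hh
    exact (mem_filter.mp hh).2

/-- If `T ⊆ A` is `α`-separable (there are `S ⊆ B`, disjoint `T₀', T₁' ⊆ T` with
`|S| ≥ α|B|`, `|T₀'|,|T₁'| ≥ α|T|` and `|d(S,T₀') - d(S,T₁')| ≥ α`), then there
are `S ⊆ B` with `|S| ≥ α|B|`, `T₀, T₁ ⊆ T` with `|T₀|,|T₁| ≥ (α²/2)|T|`, and
reals `d₀, d₁` with `d₁ - d₀ ≥ (α/4)|S|`, such that each `h ∈ T₀` has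
`e(h,S) ≤ d₀` and each `h ∈ T₁` has `e(h,S) ≥ d₁`. -/
theorem stmt4 (E : A → B → Prop) [∀ a, DecidablePred (E a)]
    (α : ℝ) (hα0 : 0 < α) (hα1 : α < 1) (T : Finset A)
    (hsep : ∃ (S : Finset B) (T0' T1' : Finset A),
      T0' ⊆ T ∧ T1' ⊆ T ∧ Disjoint T0' T1' ∧
      α * (Fintype.card B : ℝ) ≤ (S.card : ℝ) ∧
      α * (T.card : ℝ) ≤ (T0'.card : ℝ) ∧
      α * (T.card : ℝ) ≤ (T1'.card : ℝ) ∧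
      α ≤ |density E S T0' - density E S T1'|) :
    ∃ (S : Finset B) (T0 T1 : Finset A) (d0 d1 : ℝ),
      T0 ⊆ T ∧ T1 ⊆ T ∧
      α * (Fintype.card B : ℝ) ≤ (S.card : ℝ) ∧
      α ^ 2 / 2 * (T.card : ℝ) ≤ (T0.card : ℝ) ∧
      α ^ 2 / 2 * (T.card : ℝ) ≤ (T1.card : ℝ) ∧
      α / 4 * (S.card : ℝ) ≤ d1 - d0 ∧
      (∀ h ∈ T0, (eDeg E h S : ℝ) ≤ d0) ∧
      (∀ h ∈ T1, d1 ≤ (eDeg E h S : ℝ)) := by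
  obtain ⟨S, T0', T1', h0T, h1T, _hdisj, hS, h0, h1, habs⟩ := hsep
  rcases le_abs.mp habs with h | h
  · exact aux E α hα0 hα1 T S T1' T0' h1T h0T hS h1 h0 (by linarith)
  · exact aux E α hα0 hα1 T S T0' T1' h0T h1T hS h0 h1 (by linarith)
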